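/- Let Λ be the thermal channel Λ(X) = Tr_R(U (ρ_R ⊗ X) U†) induced by an energy-conserving unitary U and a diagonal bath state ρ_R. Then for all indices i, j, k, l in Fin n, if H_S(k) − H_S(l) ≠ H_S(i) − H_S(j), then the (k,l) entry of Λ(E_{ij}) is zero, where E_{ij} is the matrix unit. (In other words, Λ(E_{ij}) is supported only on pairs (k,l) whose Bohr frequency E_k − E_l equals E_i − E_j.) -/

import Mathlib

open Matrix Kronecker

/-- Partial trace over the reservoir `R`: `(Tr_R M)_{s,s'} = ∑_r M_{(r,s),(r,s')}`. -/
noncomputable def ptrR {m n : ℕ} (M : Matrix (Fin m × Fin n) (Fin m × Fin n) ℂ) :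
    Matrix (Fin n) (Fin n) ℂ :=
  Matrix.of fun s s' => ∑ r, M (r, s) (r, s')

/-- For the thermal channel `Λ(X) = Tr_R (U (ρ_R ⊗ X) U†)` induced by an
energy-conserving unitary `U` and a diagonal bath state `ρ_R`, the image of the
matrix unit `E_{ij}` is supported only on pairs `(k,l)` whose Bohr frequency
`H_S k − H_S l` equals `H_S i − H_S j`. -/
theorem thermal_channel_bohr_support (m n : ℕ) (hm : 1 ≤ m) (hn : 1 ≤ n)
    (H_R : Fin m → ℝ) (H_S : Fin n → ℝ)
    (U : Matrix (Fin m × Fin n) (Fin m × Fin n) ℂ)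
    (hU : U ∈ Matrix.unitaryGroup (Fin m × Fin n) ℂ)
    (hUH : U * Matrix.diagonal (fun p => ((H_R p.1 + H_S p.2 : ℝ) : ℂ))
         = Matrix.diagonal (fun p => ((H_R p.1 + H_S p.2 : ℝ) : ℂ)) * U)
    (ρ : Fin m → ℝ) (hρ : ∀ r, 0 ≤ ρ r) (hρ1 : ∑ r, ρ r = 1)
    (Λ : Matrix (Fin n) (Fin n) ℂ → Matrix (Fin n) (Fin n) ℂ)
    (hΛ : ∀ X, Λ X = ptrR (U * ((Matrix.diagonal fun r => ((ρ r : ℝ) : ℂ)) ⊗ₖ X) * Uᴴ))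
    (i j k l : Fin n) (hfreq : H_S k - H_S l ≠ H_S i - H_S j) :
    Λ (Matrix.single i j 1) k l = 0 := by
  have key : ∀ p q : Fin m × Fin n, U p q ≠ 0 →
      H_R p.1 + H_S p.2 = H_R q.1 + H_S q.2 := by
    intro p q hpq
    have h := congrFun (congrFun hUH p) q
    rw [Matrix.mul_apply, Matrix.mul_apply] at h
    simp only [Matrix.diagonal_apply, mul_ite, mul_zero, ite_mul, zero_mul,
      Finset.sum_ite_eq, Finset.sum_ite_eq', Finset.mem_univ, if_true] at h
    have h' : ((H_R q.1 + H_S q.2 : ℝ) : ℂ) * U p q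
        = ((H_R p.1 + H_S p.2 : ℝ) : ℂ) * U p q := by
      rw [mul_comm] at h; rw [h]
    have := mul_right_cancel₀ hpq h'
    exact_mod_cast this.symm
  rw [hΛ, ptrR]
  simp only [Matrix.of_apply]
  apply Finset.sum_eq_zero
  intro r _
  rw [Matrix.mul_apply]
  apply Finset.sum_eq_zero
  intro q _
  rw [Matrix.mul_apply, Finset.sum_mul]
  apply Finset.sum_eq_zero
  intro p _
  rcases p with ⟨a, b⟩
  rcases q with ⟨c, d⟩
  by_cases h1 : U (r, k) (a, b) = 0
  · simp [h1]
  by_cases h2 : U (r, l) (c, d) = 0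
  · simp [Matrix.conjTranspose_apply, h2]
  by_cases h3 : a = c ∧ b = i ∧ d = j
  · exfalso
    obtain ⟨rfl, rfl, rfl⟩ := h3
    have e1 := key _ _ h1
    have e2 := key _ _ h2
    simp only at e1 e2
    exact hfreq (by linarith)
  · have hK : (Matrix.diagonal (fun r => ((ρ r : ℝ) : ℂ)) ⊗ₖ
        Matrix.single i j (1 : ℂ)) (a, b) (c, d) = 0 := by
      rw [Matrix.kroneckerMap_apply]
      rcases Decidable.not_and_iff_or_not.mp h3 with h | h
      · rw [Matrix.diagonal_apply_ne _ h, zero_mul]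
      rcases Decidable.not_and_iff_or_not.mp h with h | h
      · simp [Matrix.single, Ne.symm h]
      · simp [Matrix.single, Ne.symm h]
    rw [hK, mul_zero, zero_mul]
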